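/- arXiv:2304.06645 — 6 statements merged into one kernel-verified Lean document; each statement's English description precedes it below -/
import Mathlib

section
/- The AGM conjunction is monotone: if r_i ≤ s_i for all i ∈ {1,...,N} with all r_i, s_i ∈ [-1,1], then AGM_∧(r_1,...,r_N) ≤ AGM_∧(s_1,...,s_N). -/
open Finset

noncomputable def agmAnd (N : ℕ) (r : Fin N → ℝ) : ℝ :=
  if ∀ i, 0 < r i then (∏ i, (1 + r i)) ^ ((N : ℝ)⁻¹) - 1
  else (1 / (N : ℝ)) * ∑ i, min (r i) 0

theorem agmAnd_mono (N : ℕ) (r s : Fin N → ℝ)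
    (hr : ∀ i, r i ∈ Set.Icc (-1 : ℝ) 1) (hs : ∀ i, s i ∈ Set.Icc (-1 : ℝ) 1)
    (hle : ∀ i, r i ≤ s i) :
    agmAnd N r ≤ agmAnd N s := by
  unfold agmAnd
  by_cases hrp : ∀ i, 0 < r i
  · have hsp : ∀ i, 0 < s i := fun i => lt_of_lt_of_le (hrp i) (hle i)
    rw [if_pos hrp, if_pos hsp]
    have hprod : (∏ i, (1 + r i)) ≤ ∏ i, (1 + s i) := by
      apply Finset.prod_le_prod
      · intro i _; linarith [(hrp i)]
      · intro i _; linarith [hle i]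
    have h0 : (0:ℝ) ≤ ∏ i, (1 + r i) := by
      apply Finset.prod_nonneg; intro i _; linarith [(hrp i)]
    gcongr
  · rw [if_neg hrp]
    by_cases hsp : ∀ i, 0 < s i
    · rw [if_pos hsp]
      have h1 : (1 / (N : ℝ)) * ∑ i, min (r i) 0 ≤ 0 := by
        apply mul_nonpos_of_nonneg_of_nonpos
        · positivity
        · apply Finset.sum_nonpos; intro i _; exact min_le_right _ _
      have h2 : (1:ℝ) ≤ (∏ i, (1 + s i)) ^ ((N : ℝ)⁻¹) := by
        calc (1:ℝ) = (1:ℝ) ^ ((N : ℝ)⁻¹) := (Real.one_rpow _).symm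
        _ ≤ (∏ i, (1 + s i)) ^ ((N : ℝ)⁻¹) := by
            apply Real.rpow_le_rpow (by norm_num) ?_ (by positivity)
            have := Finset.prod_le_prod (s := Finset.univ) (f := fun _ : Fin N => (1:ℝ))
              (g := fun i => 1 + s i) (fun i _ => by norm_num) (fun i _ => by show (1:ℝ) ≤ 1 + s i; linarith [hsp i])
            simpa using this
      linarith
    · rw [if_neg hsp]
      apply mul_le_mul_of_nonneg_left _ (by positivity)
      apply Finset.sum_le_sum
      intro i _
      exact min_le_min (hle i) le_rfl
end

section
/- Agreement of sign between TWTL robustness and AGM robustness for hold: let v_t ∈ [-1,1] \ {0} for t ∈ [t₁, t₁+d]. Then min_t v_t > 0 if and only if AGM_∧(v_{t₁},...,v_{t₁+d}) > 0, and min_t v_t < 0 if and only if AGM_∧(v_{t₁},...,v_{t₁+d}) < 0. -/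
open Finset

theorem hold_sign_agreement (t₁ d : ℕ) (v : ℕ → ℝ)
    (hbnd : ∀ t ∈ Finset.Icc t₁ (t₁ + d), v t ∈ Set.Icc (-1 : ℝ) 1)
    (hne : ∀ t ∈ Finset.Icc t₁ (t₁ + d), v t ≠ 0) :
    (0 < (Finset.Icc t₁ (t₁ + d)).inf' (Finset.nonempty_Icc.mpr (Nat.le_add_right t₁ d)) v ↔
      0 < agmAnd (d + 1) (fun i => v (t₁ + i))) ∧
    ((Finset.Icc t₁ (t₁ + d)).inf' (Finset.nonempty_Icc.mpr (Nat.le_add_right t₁ d)) v < 0 ↔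
      agmAnd (d + 1) (fun i => v (t₁ + i)) < 0) := by
  have hmem : ∀ i : Fin (d + 1), t₁ + (i : ℕ) ∈ Finset.Icc t₁ (t₁ + d) := by
    intro i
    simp only [Finset.mem_Icc]
    exact ⟨Nat.le_add_right _ _, Nat.add_le_add_left (Nat.lt_succ_iff.mp i.isLt) _⟩
  have hinf_pos : 0 < (Finset.Icc t₁ (t₁ + d)).inf'
      (Finset.nonempty_Icc.mpr (Nat.le_add_right t₁ d)) v ↔
      ∀ i : Fin (d + 1), 0 < v (t₁ + i) := by
    rw [Finset.lt_inf'_iff]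
    constructor
    · intro h i; exact h _ (hmem i)
    · intro h t ht
      rw [Finset.mem_Icc] at ht
      have hlt : t - t₁ < d + 1 := by omega
      have := h ⟨t - t₁, hlt⟩
      simpa [show t₁ + (t - t₁) = t by omega] using this
  by_cases hall : ∀ i : Fin (d + 1), 0 < v (t₁ + (i : ℕ))
  · have hagm : 0 < agmAnd (d + 1) (fun i => v (t₁ + i)) := by
      rw [agmAnd, if_pos hall]
      have hprod : 1 < ∏ i : Fin (d + 1), (1 + v (t₁ + (i : ℕ))) := by
        have := Finset.prod_lt_prod_of_nonempty (f := fun _ : Fin (d+1) => (1:ℝ))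
          (g := fun i : Fin (d+1) => 1 + v (t₁ + (i:ℕ))) (s := Finset.univ)
          (by intro i _; norm_num) (by intro i _; simp; linarith [hall i])
          Finset.univ_nonempty
        simpa using this
      have : (1 : ℝ) < (∏ i : Fin (d + 1), (1 + v (t₁ + (i : ℕ)))) ^ (((d : ℝ) + 1)⁻¹) := by
        exact (Real.one_lt_rpow_iff_of_pos (by linarith)).mpr (Or.inl ⟨hprod, by positivity⟩)
      push_cast
      linarith
    constructor
    · simp [hinf_pos, hall, hagm]
    · constructor
      · intro h
        rw [Finset.inf'_lt_iff] at h
        obtain ⟨t, ht, hv⟩ := h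
        rw [Finset.mem_Icc] at ht
        have := hall ⟨t - t₁, by omega⟩
        simp only [show t₁ + (t - t₁) = t by omega] at this
        linarith
      · intro h; linarith
  · push_neg at hall
    obtain ⟨i, hi⟩ := hall
    have hvi : v (t₁ + (i : ℕ)) < 0 :=
      lt_of_le_of_ne hi (hne _ (hmem i))
    have hagm : agmAnd (d + 1) (fun i => v (t₁ + i)) < 0 := by
      rw [agmAnd, if_neg (by push_neg; exact ⟨i, hi⟩)]
      apply mul_neg_of_pos_of_neg
      · positivity
      · have : ∑ j : Fin (d + 1), min (v (t₁ + (j : ℕ))) 0 <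
            ∑ _j : Fin (d + 1), (0 : ℝ) := by
          apply Finset.sum_lt_sum
          · intro j _; exact min_le_right _ _
          · exact ⟨i, Finset.mem_univ i, by simpa [min_eq_left hvi.le] using hvi⟩
        simpa using this
    have hinf : (Finset.Icc t₁ (t₁ + d)).inf'
        (Finset.nonempty_Icc.mpr (Nat.le_add_right t₁ d)) v < 0 := by
      rw [Finset.inf'_lt_iff]
      exact ⟨t₁ + i, hmem i, hvi⟩
    constructor
    · constructor
      · intro h; linarith
      · intro h; linarith
    · simp [hinf, hagm]
end

section
/- Agreement of sign for the 'within' operator: for values w_t ∈ [-1,1] \ {0} indexed by t ∈ [a, b], max_t w_t > 0 iff AGM_∨(w_a,...,w_b) > 0, and max_t w_t < 0 iff AGM_∨(w_a,...,w_b) < 0. -/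
open Finset

noncomputable def agmOr (N : ℕ) (r : Fin N → ℝ) : ℝ :=
  if ∀ i, r i < 0 then 1 - (∏ i, (1 - r i)) ^ ((N : ℝ)⁻¹)
  else (1 / (N : ℝ)) * ∑ i, max (r i) 0

theorem within_sign_agreement (a b : ℕ) (hab : a ≤ b) (w : ℕ → ℝ)
    (hbnd : ∀ t ∈ Finset.Icc a b, w t ∈ Set.Icc (-1 : ℝ) 1)
    (hne : ∀ t ∈ Finset.Icc a b, w t ≠ 0) :
    (0 < (Finset.Icc a b).sup' (Finset.nonempty_Icc.mpr hab) w ↔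
      0 < agmOr (b - a + 1) (fun i => w (a + i))) ∧
    ((Finset.Icc a b).sup' (Finset.nonempty_Icc.mpr hab) w < 0 ↔
      agmOr (b - a + 1) (fun i => w (a + i)) < 0) := by
  have hmem : ∀ i : Fin (b - a + 1), a + (i : ℕ) ∈ Finset.Icc a b := by
    intro i
    have := i.isLt
    rw [Finset.mem_Icc]
    omega
  by_cases h : ∀ i : Fin (b - a + 1), w (a + (i : ℕ)) < 0
  · have hallneg : ∀ t ∈ Finset.Icc a b, w t < 0 := by
      intro t ht
      rw [Finset.mem_Icc] at ht
      have h1 : t - a < b - a + 1 := by omega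
      have h2 : t = a + ((⟨t - a, h1⟩ : Fin (b - a + 1)) : ℕ) := by simp; omega
      rw [h2]; exact h _
    have hsup : (Finset.Icc a b).sup' (Finset.nonempty_Icc.mpr hab) w < 0 :=
      (Finset.sup'_lt_iff _).mpr hallneg
    have hagm : agmOr (b - a + 1) (fun i => w (a + (i : ℕ))) < 0 := by
      rw [agmOr, if_pos h]
      have hP : (1 : ℝ) < ∏ i : Fin (b - a + 1), (1 - w (a + (i : ℕ))) := by
        have := Finset.prod_lt_prod_of_nonempty (f := fun _ : Fin (b - a + 1) => (1 : ℝ))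
          (g := fun i : Fin (b - a + 1) => 1 - w (a + (i : ℕ)))
          (fun i _ => one_pos) (fun i _ => by have := h i; show (1:ℝ) < 1 - w (a + (i : ℕ)); have := h i; linarith) Finset.univ_nonempty
        simpa using this
      have hrp : (1 : ℝ) < (∏ i : Fin (b - a + 1), (1 - w (a + (i : ℕ)))) ^ (((b - a + 1 : ℕ) : ℝ)⁻¹) := by
        rw [Real.one_lt_rpow_iff_of_pos (by linarith)]
        exact Or.inl ⟨hP, by positivity⟩
      linarith
    constructor
    · constructor <;> intro hx <;> linarith
    · exact ⟨fun _ => hagm, fun _ => hsup⟩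
  · have hne' := h
    push_neg at h
    obtain ⟨i0, hi0⟩ := h
    have hpos : 0 < w (a + (i0 : ℕ)) :=
      lt_of_le_of_ne hi0 (Ne.symm (hne _ (hmem i0)))
    have hsup : 0 < (Finset.Icc a b).sup' (Finset.nonempty_Icc.mpr hab) w :=
      (Finset.lt_sup'_iff _).mpr ⟨a + (i0 : ℕ), hmem i0, hpos⟩
    have hagm : 0 < agmOr (b - a + 1) (fun i => w (a + (i : ℕ))) := by
      rw [agmOr, if_neg hne']
      apply mul_pos
      · positivity
      · refine Finset.sum_pos' (fun i _ => le_max_right _ _) ⟨i0, Finset.mem_univ _, ?_⟩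
        simp [hpos, le_of_lt hpos]
    constructor
    · exact ⟨fun _ => hagm, fun _ => hsup⟩
    · constructor <;> intro hx <;> linarith
end

section
/- Interval AGM arithmetic preserves membership: if x_i ∈ [l_i, u_i] ⊆ [-1,1] for i = 1,...,N, then AGM_∧(x_1,...,x_N) ∈ [AGM_∧(l_1,...,l_N), AGM_∧(u_1,...,u_N)] and AGM_∨(x_1,...,x_N) ∈ [AGM_∨(l_1,...,l_N), AGM_∨(u_1,...,u_N)]. -/
open Finset

lemma agmAnd_mono_s15 (N : ℕ) (a b : Fin N → ℝ) (h : ∀ i, a i ≤ b i) :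
    agmAnd N a ≤ agmAnd N b := by
  unfold agmAnd
  by_cases ha : ∀ i, 0 < a i
  · have hb : ∀ i, 0 < b i := fun i => lt_of_lt_of_le (ha i) (h i)
    rw [if_pos ha, if_pos hb]
    have : (∏ i, (1 + a i)) ^ ((N : ℝ)⁻¹) ≤ (∏ i, (1 + b i)) ^ ((N : ℝ)⁻¹) := by
      apply Real.rpow_le_rpow
      · exact Finset.prod_nonneg fun i _ => by linarith [(ha i)]
      · exact Finset.prod_le_prod (fun i _ => by linarith [(ha i)]) (fun i _ => by linarith [h i])
      · positivity
    linarith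
  · rw [if_neg ha]
    have hle0 : (1 / (N : ℝ)) * ∑ i, min (a i) 0 ≤ 0 := by
      apply mul_nonpos_of_nonneg_of_nonpos
      · positivity
      · exact Finset.sum_nonpos fun i _ => min_le_right _ _
    by_cases hb : ∀ i, 0 < b i
    · rw [if_pos hb]
      have h1 : (1:ℝ) ≤ ∏ i, (1 + b i) := by
        calc (1:ℝ) = ∏ _i : Fin N, (1:ℝ) := by simp
          _ ≤ ∏ i, (1 + b i) :=
            Finset.prod_le_prod (fun i _ => by norm_num) (fun i _ => by linarith [hb i])
      have : (1:ℝ) ≤ (∏ i, (1 + b i)) ^ ((N : ℝ)⁻¹) :=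
        Real.one_le_rpow h1 (by positivity)
      linarith
    · rw [if_neg hb]
      apply mul_le_mul_of_nonneg_left _ (by positivity)
      exact Finset.sum_le_sum fun i _ => min_le_min (h i) le_rfl

lemma agmOr_mono (N : ℕ) (a b : Fin N → ℝ) (h : ∀ i, a i ≤ b i) :
    agmOr N a ≤ agmOr N b := by
  unfold agmOr
  by_cases hb : ∀ i, b i < 0
  · have ha : ∀ i, a i < 0 := fun i => lt_of_le_of_lt (h i) (hb i)
    rw [if_pos ha, if_pos hb]
    have : (∏ i, (1 - b i)) ^ ((N : ℝ)⁻¹) ≤ (∏ i, (1 - a i)) ^ ((N : ℝ)⁻¹) := by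
      apply Real.rpow_le_rpow
      · exact Finset.prod_nonneg fun i _ => by linarith [(hb i)]
      · exact Finset.prod_le_prod (fun i _ => by linarith [(hb i)]) (fun i _ => by linarith [h i])
      · positivity
    linarith
  · rw [if_neg hb]
    have hge0 : 0 ≤ (1 / (N : ℝ)) * ∑ i, max (b i) 0 := by
      apply mul_nonneg (by positivity)
      exact Finset.sum_nonneg fun i _ => le_max_right _ _
    by_cases ha : ∀ i, a i < 0
    · rw [if_pos ha]
      have h1 : (1:ℝ) ≤ ∏ i, (1 - a i) := by
        calc (1:ℝ) = ∏ _i : Fin N, (1:ℝ) := by simp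
          _ ≤ ∏ i, (1 - a i) :=
            Finset.prod_le_prod (fun i _ => by norm_num) (fun i _ => by linarith [ha i])
      have : (1:ℝ) ≤ (∏ i, (1 - a i)) ^ ((N : ℝ)⁻¹) :=
        Real.one_le_rpow h1 (by positivity)
      linarith
    · rw [if_neg ha]
      apply mul_le_mul_of_nonneg_left _ (by positivity)
      exact Finset.sum_le_sum fun i _ => max_le_max (h i) le_rfl

theorem interval_agm_mem (N : ℕ) (x l u : Fin N → ℝ)
    (hl : ∀ i, -1 ≤ l i) (hu : ∀ i, u i ≤ 1)
    (hmem : ∀ i, x i ∈ Set.Icc (l i) (u i)) :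
    agmAnd N x ∈ Set.Icc (agmAnd N l) (agmAnd N u) ∧
    agmOr N x ∈ Set.Icc (agmOr N l) (agmOr N u) := by
  have hlx : ∀ i, l i ≤ x i := fun i => (hmem i).1
  have hxu : ∀ i, x i ≤ u i := fun i => (hmem i).2
  exact ⟨⟨agmAnd_mono_s15 N l x hlx, agmAnd_mono_s15 N x u hxu⟩,
    ⟨agmOr_mono N l x hlx, agmOr_mono N x u hxu⟩⟩
end

section
/- Soundness of the AGM hold monitor in the all-positive case: suppose η_t := η(o(t)) ∈ (0, η_max] for all observed t ∈ [t₁, t′] with t′ < t₁+d, where all pointwise AGM robustness values lie in [η_min, η_max] ⊆ [-1,1] with η_min < 0 < η_max. Then for any completion with pointwise values v_t ∈ [η_min, η_max] (v_t = η_t for t ≤ t′), AGM_∧(v_{t₁},...,v_{t₁+d}) is at most (∏_{t∈[t₁,t′]}(1+η_t) · (1+η_max)^{d - (t′-t₁)})^{1/(d+1)} - 1 and at least ((d - (t′-t₁))/(d+1))·η_min. -/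
open Finset

lemma one_le_prod_real {ι : Type*} {s : Finset ι} {f : ι → ℝ} (h : ∀ i ∈ s, 1 ≤ f i) :
    1 ≤ ∏ i ∈ s, f i := by
  calc (1:ℝ) = ∏ _i ∈ s, 1 := by simp
    _ ≤ ∏ i ∈ s, f i := Finset.prod_le_prod (by intros; norm_num) h

theorem agm_hold_monitor_all_pos (t₁ t' d : ℕ) (h₁ : t₁ ≤ t') (h₂ : t' < t₁ + d)
    (ηmin ηmax : ℝ) (hm1 : -1 ≤ ηmin) (hm2 : ηmin < 0) (hm3 : 0 < ηmax) (hm4 : ηmax ≤ 1)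
    (η v : ℕ → ℝ)
    (hobs : ∀ t ∈ Finset.Icc t₁ t', 0 < η t ∧ η t ≤ ηmax)
    (hagree : ∀ t ∈ Finset.Icc t₁ t', v t = η t)
    (hv : ∀ t ∈ Finset.Icc t₁ (t₁ + d), ηmin ≤ v t ∧ v t ≤ ηmax) :
    agmAnd (d + 1) (fun i => v (t₁ + i)) ≤
      ((∏ t ∈ Finset.Icc t₁ t', (1 + η t)) * (1 + ηmax) ^ (d - (t' - t₁))) ^
        (((d : ℝ) + 1)⁻¹) - 1 ∧
    ((d - (t' - t₁) : ℕ) : ℝ) / ((d : ℝ) + 1) * ηmin ≤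
      agmAnd (d + 1) (fun i => v (t₁ + i)) := by
  set m := t' - t₁ with hm
  set k := d - m with hk
  have ht' : t' = t₁ + m := by omega
  have hd : d = m + k := by omega
  have hk1 : 1 ≤ k := by omega
  -- the observed product over Icc as a range product
  have hIcc : ∏ t ∈ Finset.Icc t₁ t', (1 + η t)
      = ∏ i ∈ Finset.range (m + 1), (1 + η (t₁ + i)) := by
    rw [← Finset.Ico_add_one_right_eq_Icc, Finset.prod_Ico_eq_prod_range,
      show t' + 1 - t₁ = m + 1 from by omega]
  have hRHS1 : (1 : ℝ) ≤ (∏ t ∈ Finset.Icc t₁ t', (1 + η t)) * (1 + ηmax) ^ k := by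
    have h1 : (1 : ℝ) ≤ ∏ t ∈ Finset.Icc t₁ t', (1 + η t) := by
      apply one_le_prod_real
      intro t ht
      have := (hobs t ht).1
      linarith
    have h2 : (1 : ℝ) ≤ (1 + ηmax) ^ k := one_le_pow₀ (by linarith)
    nlinarith
  have hmem : ∀ i, i ≤ d → t₁ + i ∈ Finset.Icc t₁ (t₁ + d) := by
    intro i hi; simp [Finset.mem_Icc]; omega
  have hcast : (((d : ℕ) : ℝ) + 1)⁻¹ = (((d + 1 : ℕ) : ℝ))⁻¹ := by push_cast; ring
  unfold agmAnd
  split_ifs with hpos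
  · -- all positive case
    have hprod : ∏ i : Fin (d + 1), (1 + v (t₁ + (i : ℕ)))
        = ∏ i ∈ Finset.range (d + 1), (1 + v (t₁ + i)) :=
      Fin.prod_univ_eq_prod_range (fun n => 1 + v (t₁ + n)) (d + 1)
    constructor
    · have hle : ∏ i ∈ Finset.range (d + 1), (1 + v (t₁ + i))
          ≤ (∏ t ∈ Finset.Icc t₁ t', (1 + η t)) * (1 + ηmax) ^ k := by
        have hsplit : Finset.range (d + 1) = Finset.range ((m + 1) + k) := by
          congr 1; omega
        rw [hsplit, Finset.prod_range_add, hIcc]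
        have e1 : ∏ i ∈ Finset.range (m + 1), (1 + v (t₁ + i))
            = ∏ i ∈ Finset.range (m + 1), (1 + η (t₁ + i)) := by
          apply Finset.prod_congr rfl
          intro i hi
          rw [hagree]
          simp [Finset.mem_Icc]; simp at hi; omega
        rw [e1]
        apply mul_le_mul_of_nonneg_left
        · calc ∏ i ∈ Finset.range k, (1 + v (t₁ + (m + 1 + i)))
              ≤ ∏ _i ∈ Finset.range k, (1 + ηmax) := by
                apply Finset.prod_le_prod
                · intro i _
                  have := (hv _ (hmem (m + 1 + i) (by simp at *; omega))).1
                  linarith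
                · intro i hi
                  have := (hv _ (hmem (m + 1 + i) (by simp at *; omega))).2
                  linarith
            _ = (1 + ηmax) ^ k := by rw [Finset.prod_const, Finset.card_range]
        · apply Finset.prod_nonneg
          intro i hi
          have := (hobs (t₁ + i) (by simp [Finset.mem_Icc]; simp at hi; omega)).1
          linarith
      have h0 : 0 ≤ ∏ i : Fin (d + 1), (1 + v (t₁ + (i : ℕ))) := by
        rw [hprod]
        apply Finset.prod_nonneg
        intro i hi
        have := (hv _ (hmem i (by simp at hi; omega))).1
        linarith
      have := Real.rpow_le_rpow h0 (hprod.trans_le hle) (by positivity : (0:ℝ) ≤ ((d:ℝ)+1)⁻¹)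
      rw [hcast] at this ⊢
      linarith [this]
    · -- lower bound: agm ≥ 0 ≥ rhs
      have h1 : (1:ℝ) ≤ ∏ i : Fin (d + 1), (1 + v (t₁ + (i : ℕ))) := by
        apply one_le_prod_real
        intro i _
        have := hpos i
        simp only at this
        linarith
      have h2 : (1:ℝ) ≤ (∏ i : Fin (d + 1), (1 + v (t₁ + (i : ℕ)))) ^ (((d + 1 : ℕ) : ℝ))⁻¹ :=
        Real.one_le_rpow h1 (by positivity)
      have h3 : ((k : ℝ) / ((d : ℝ) + 1)) * ηmin ≤ 0 := by
        apply mul_nonpos_of_nonneg_of_nonpos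
        · positivity
        · linarith
      calc ((k : ℝ) / ((d : ℝ) + 1)) * ηmin ≤ 0 := h3
        _ ≤ _ := by simpa using h2
  · -- not all positive case
    have hsum : ∑ i : Fin (d + 1), min (v (t₁ + (i : ℕ))) 0
        = ∑ i ∈ Finset.range (d + 1), min (v (t₁ + i)) 0 :=
      Fin.sum_univ_eq_sum_range (fun n => min (v (t₁ + n)) 0) (d + 1)
    constructor
    · -- agm ≤ 0 ≤ rhs
      have hL : (1 / ((d + 1 : ℕ) : ℝ)) * ∑ i : Fin (d + 1), min (v (t₁ + (i : ℕ))) 0 ≤ 0 := by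
        apply mul_nonpos_of_nonneg_of_nonpos
        · positivity
        · apply Finset.sum_nonpos
          intro i _
          exact min_le_right _ _
      have hR : (1:ℝ) ≤ ((∏ t ∈ Finset.Icc t₁ t', (1 + η t)) * (1 + ηmax) ^ k)
          ^ (((d : ℝ) + 1)⁻¹) :=
        Real.one_le_rpow hRHS1 (by positivity)
      linarith
    · -- lower bound
      have hlow : ((k : ℝ)) * ηmin ≤ ∑ i ∈ Finset.range (d + 1), min (v (t₁ + i)) 0 := by
        have hsplit : Finset.range (d + 1) = Finset.range ((m + 1) + k) := by
          congr 1; omega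
        rw [hsplit, Finset.sum_range_add]
        have e1 : ∑ i ∈ Finset.range (m + 1), min (v (t₁ + i)) 0 = 0 := by
          apply Finset.sum_eq_zero
          intro i hi
          have hmem' : t₁ + i ∈ Finset.Icc t₁ t' := by
            simp [Finset.mem_Icc]; simp at hi; omega
          rw [hagree _ hmem']
          exact min_eq_right (le_of_lt (hobs _ hmem').1)
        rw [e1, zero_add]
        calc ((k : ℝ)) * ηmin = ∑ _i ∈ Finset.range k, ηmin := by
              rw [Finset.sum_const, Finset.card_range, nsmul_eq_mul]
          _ ≤ ∑ i ∈ Finset.range k, min (v (t₁ + (m + 1 + i))) 0 := by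
              apply Finset.sum_le_sum
              intro i hi
              apply le_min
              · exact (hv _ (hmem (m + 1 + i) (by simp at *; omega))).1
              · linarith
      rw [hsum]
      push_cast
      have hthis := mul_le_mul_of_nonneg_left hlow
        (by positivity : (0:ℝ) ≤ 1 / ((d:ℝ) + 1))
      have heq : (k:ℝ) / ((d:ℝ) + 1) * ηmin = 1 / ((d:ℝ) + 1) * ((k:ℝ) * ηmin) := by ring
      rw [heq]
      exact hthis
end

section
/- Monotone convergence of the hold robustness monitor: for a fixed word o and times t₁ ≤ s ≤ s′ ≤ t₁ + d, the monitor interval at time s′, namely [ρ_⊥, min_{t∈[t₁,s′]} h(o(t))] (or the singleton {min_{t∈[t₁,t₁+d]} h(o(t))} when s′ = t₁+d), is contained in the monitor interval at time s; and when s′ = t₁ + d the interval equals the singleton containing the true robustness min_{t∈[t₁,t₁+d]} h(o(t)), provided ρ_⊥ ≤ h(o(t)) for all t. -/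
open Finset

/-- Robustness monitor interval for `H^d π_A` given observations up to time `s`. -/
noncomputable def holdMonitor (o : ℕ → ℝ) (h : ℝ → ℝ) (t₁ d : ℕ) (ρbot : ℝ)
    (s : ℕ) (hs : t₁ ≤ s) : Set ℝ :=
  if s < t₁ + d then
    Set.Icc ρbot ((Finset.Icc t₁ s).inf' (Finset.nonempty_Icc.mpr hs) (fun t => h (o t)))
  else
    {(Finset.Icc t₁ (t₁ + d)).inf' (Finset.nonempty_Icc.mpr (Nat.le_add_right t₁ d))
      (fun t => h (o t))}

theorem hold_monitor_convergence (o : ℕ → ℝ) (h : ℝ → ℝ) (t₁ d : ℕ) (ρbot : ℝ)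
    (s s' : ℕ) (hs : t₁ ≤ s) (hss' : s ≤ s') (hs' : s' ≤ t₁ + d)
    (hρ : ∀ t ∈ Finset.Icc t₁ (t₁ + d), ρbot ≤ h (o t)) :
    holdMonitor o h t₁ d ρbot s' (hs.trans hss') ⊆ holdMonitor o h t₁ d ρbot s hs ∧
    holdMonitor o h t₁ d ρbot (t₁ + d) (Nat.le_add_right t₁ d) =
      {(Finset.Icc t₁ (t₁ + d)).inf' (Finset.nonempty_Icc.mpr (Nat.le_add_right t₁ d))
        (fun t => h (o t))} := by
  have hmono : ∀ (a b : ℕ) (ha : t₁ ≤ a) (hab : a ≤ b),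
      (Finset.Icc t₁ b).inf' (Finset.nonempty_Icc.mpr (ha.trans hab)) (fun t => h (o t)) ≤
      (Finset.Icc t₁ a).inf' (Finset.nonempty_Icc.mpr ha) (fun t => h (o t)) := by
    intro a b ha hab
    apply Finset.le_inf'
    intro t ht
    exact Finset.inf'_le _ (Finset.mem_Icc.mpr ⟨(Finset.mem_Icc.mp ht).1,
      (Finset.mem_Icc.mp ht).2.trans hab⟩)
  constructor
  · intro x hx
    unfold holdMonitor at *
    by_cases h1 : s' < t₁ + d
    · have h2 : s < t₁ + d := lt_of_le_of_lt hss' h1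
      rw [if_pos h1] at hx
      rw [if_pos h2]
      exact ⟨hx.1, hx.2.trans (hmono s s' hs hss')⟩
    · have hse : s' = t₁ + d := le_antisymm hs' (not_lt.mp h1)
      rw [if_neg h1] at hx
      by_cases h2 : s < t₁ + d
      · rw [if_pos h2]
        rw [Set.mem_singleton_iff] at hx
        subst hx
        constructor
        · apply Finset.le_inf'
          intro t ht
          exact hρ t ht
        · exact hmono s (t₁ + d) hs (le_of_lt h2)
      · rw [if_neg h2]; exact hx
  · unfold holdMonitor
    rw [if_neg (lt_irrefl _)]
end
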